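/- arXiv:2011.04419 — 4 statements merged into one kernel-verified Lean document; each statement's English description precedes it below -/
import Mathlib

section
/- Fix y ∈ {0,1} and set ȳ := 1 − y. Let D₀ and D₁ be probability measures on ℝ^d (class-conditional input distributions for labels 0 and 1), D_{x̃} a probability measure on ℝ^d, and D_α a probability measure on ℝ. Fix α ∈ ℝ and x̃ ∈ ℝ^d, a map δ : ℝ^d × ℝ^d → ℝ^d, an encoder h : ℝ^d → ℝ^m, and ζ : ℝ^m → ℝ with ζ(h(z)) ≠ 0 for all z ∈ ℝ^d, and define sim[q, q'] := qᵀq'/(ζ(q)ζ(q')). Given independent draws x ∼ D_y, x̄ ∼ D_{1−y}, x̃', x̃'' ∼ D_{x̃}, α', α'' ∼ D_α, set x⁺ := x + α·δ(x, x̃), x⁺⁺ := x + α'·δ(x, x̃'), x⁻ := x̄ + α''·δ(x̄, x̃''), and w̃ := h(a)/ζ(h(a)) − h(b)/ζ(h(b)), where a := x⁺⁺ and b := x⁻ if y = 1, and a := x⁻ and b := x⁺⁺ if y = 0. Then, assuming all the expectations below are finite, E[ ℓ_cont(x⁺, x⁺⁺, x⁻) ] = E[ ℓ( h(x⁺)ᵀ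 w̃ / ζ(h(x⁺)), y ) ], where both expectations are over x ∼ D_y, x̄ ∼ D_{1−y}, x̃', x̃'' ∼ D_{x̃}, α', α'' ∼ D_α. -/
open MeasureTheory

/-- The binary cross-entropy loss. -/
noncomputable def bce (q y : ℝ) : ℝ :=
  -y * Real.log (1 / (1 + Real.exp (-q))) -
    (1 - y) * Real.log (1 - 1 / (1 + Real.exp (-q)))

/-- The similarity `sim[q,q'] = qᵀq'/(ζ(q)ζ(q'))`. -/
noncomputable def simZ {m : ℕ} (ζ : (Fin m → ℝ) → ℝ) (q q' : Fin m → ℝ) : ℝ :=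
  (∑ k, q k * q' k) / (ζ q * ζ q')

/-- The contrastive loss built from an encoder `h` and a similarity function `sim`. -/
noncomputable def lcont {d m : ℕ} (h : (Fin d → ℝ) → (Fin m → ℝ))
    (sim : (Fin m → ℝ) → (Fin m → ℝ) → ℝ) (xp xpp xm : Fin d → ℝ) : ℝ :=
  -Real.log (Real.exp (sim (h xp) (h xpp)) /
    (Real.exp (sim (h xp) (h xpp)) + Real.exp (sim (h xp) (h xm))))

/-- The classification loss `ℓ( h(x⁺)ᵀ w̃ / ζ(h(x⁺)), y )`, where
`w̃ = h(a)/ζ(h(a)) − h(b)/ζ(h(b))` with `a := x⁺⁺, b := x⁻` if `y = 1` and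
`a := x⁻, b := x⁺⁺` if `y = 0`. -/
noncomputable def clsLoss {d m : ℕ} (h : (Fin d → ℝ) → (Fin m → ℝ))
    (ζ : (Fin m → ℝ) → ℝ) (y : ℝ) (xp xpp xm : Fin d → ℝ) : ℝ :=
  let a := if y = 1 then xpp else xm
  let b := if y = 1 then xm else xpp
  let wt := (ζ (h a))⁻¹ • h a - (ζ (h b))⁻¹ • h b
  bce ((∑ k, h xp k * wt k) / ζ (h xp)) y

/-- Sample space for `(x, x̄, x̃', x̃'', α', α'')`. -/
abbrev Omega6 (d : ℕ) : Type :=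
  (Fin d → ℝ) × (Fin d → ℝ) × (Fin d → ℝ) × (Fin d → ℝ) × ℝ × ℝ

/-- `x⁺ := x + α·δ(x, x̃)`. -/
def XP {d : ℕ} (α : ℝ) (xt : Fin d → ℝ)
    (δ : (Fin d → ℝ) → (Fin d → ℝ) → (Fin d → ℝ)) (p : Omega6 d) : Fin d → ℝ :=
  p.1 + α • δ p.1 xt

/-- `x⁺⁺ := x + α'·δ(x, x̃')`. -/
def XPP {d : ℕ} (δ : (Fin d → ℝ) → (Fin d → ℝ) → (Fin d → ℝ)) (p : Omega6 d) : Fin d → ℝ :=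
  p.1 + p.2.2.2.2.1 • δ p.1 p.2.2.1

/-- `x⁻ := x̄ + α''·δ(x̄, x̃'')`. -/
def XM {d : ℕ} (δ : (Fin d → ℝ) → (Fin d → ℝ) → (Fin d → ℝ)) (p : Omega6 d) : Fin d → ℝ :=
  p.2.1 + p.2.2.2.2.2 • δ p.2.1 p.2.2.2.1

lemma neg_log_ratio (s1 s2 : ℝ) :
    -Real.log (Real.exp s1 / (Real.exp s1 + Real.exp s2))
      = Real.log (1 + Real.exp (s2 - s1)) := by
  have h1 : (0:ℝ) < Real.exp s1 + Real.exp s2 := by positivity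
  rw [Real.log_div (Real.exp_ne_zero _) h1.ne', Real.log_exp]
  have h2 : 1 + Real.exp (s2 - s1) = (Real.exp s1 + Real.exp s2) / Real.exp s1 := by
    rw [Real.exp_sub]
    field_simp
  rw [h2, Real.log_div h1.ne' (Real.exp_ne_zero _), Real.log_exp]
  ring

lemma bce_one (s1 s2 : ℝ) :
    bce (s1 - s2) 1 = -Real.log (Real.exp s1 / (Real.exp s1 + Real.exp s2)) := by
  rw [neg_log_ratio]
  have hp : (0:ℝ) < 1 + Real.exp (-(s1 - s2)) := by positivity
  simp only [bce, neg_sub, one_mul, sub_self, zero_mul, sub_zero, neg_mul]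
  rw [one_div, Real.log_inv, neg_neg]

lemma bce_zero (s1 s2 : ℝ) :
    bce (s2 - s1) 0 = -Real.log (Real.exp s1 / (Real.exp s1 + Real.exp s2)) := by
  rw [neg_log_ratio]
  have hp : (0:ℝ) < 1 + Real.exp (-(s2 - s1)) := by positivity
  have h3 : 1 - 1 / (1 + Real.exp (-(s2 - s1)))
      = Real.exp (-(s2 - s1)) / (1 + Real.exp (-(s2 - s1))) := by
    field_simp
    ring
  simp only [bce, neg_zero, zero_mul, sub_zero, zero_sub, neg_mul, one_mul, h3]
  rw [Real.log_div (Real.exp_ne_zero _) hp.ne', Real.log_exp]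
  have h4 : 1 + Real.exp (s2 - s1) = Real.exp (s2 - s1) * (1 + Real.exp (-(s2 - s1))) := by
    rw [mul_add, mul_one, ← Real.exp_add]
    simp [add_comm]
  rw [h4, Real.log_mul (Real.exp_ne_zero _) hp.ne', Real.log_exp]
  ring

lemma wt_dot {d m : ℕ} (h : (Fin d → ℝ) → (Fin m → ℝ)) (ζ : (Fin m → ℝ) → ℝ)
    (hζ : ∀ z, ζ (h z) ≠ 0) (xp a b : Fin d → ℝ) :
    (∑ k, h xp k * ((ζ (h a))⁻¹ • h a - (ζ (h b))⁻¹ • h b) k) / ζ (h xp)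
      = simZ ζ (h xp) (h a) - simZ ζ (h xp) (h b) := by
  simp only [Pi.sub_apply, Pi.smul_apply, smul_eq_mul, simZ, mul_sub, mul_left_comm,
    Finset.sum_sub_distrib, ← Finset.mul_sum]
  rw [sub_div]
  congr 1 <;> rw [Finset.sum_congr rfl fun k _ => mul_left_comm _ _ _, ← Finset.mul_sum] <;>
    field_simp <;> ring

lemma pointwise {d m : ℕ} (y : ℝ) (hy : y = 0 ∨ y = 1)
    (h : (Fin d → ℝ) → (Fin m → ℝ)) (ζ : (Fin m → ℝ) → ℝ) (hζ : ∀ z, ζ (h z) ≠ 0)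
    (xp xpp xm : Fin d → ℝ) :
    lcont h (simZ ζ) xp xpp xm = clsLoss h ζ y xp xpp xm := by
  rcases hy with hy | hy <;> subst hy <;>
    simp only [clsLoss, lcont, if_pos, if_neg one_ne_zero, zero_ne_one, if_false, if_true,
      wt_dot h ζ hζ]
  · rw [bce_zero]
  · rw [bce_one]

/-- Expectation of the contrastive loss (over `x ∼ D_y`, `x̄ ∼ D_{1−y}`, `x̃', x̃'' ∼ D_{x̃}`,
`α', α'' ∼ D_α`) equals the expectation of the classification loss `ℓ(h(x⁺)ᵀw̃/ζ(h(x⁺)), y)`. -/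
theorem stmt3 {d m : ℕ} (y : ℝ) (hy : y = 0 ∨ y = 1)
    (Dy D1my Dxt : Measure (Fin d → ℝ)) (Da : Measure ℝ)
    [IsProbabilityMeasure Dy] [IsProbabilityMeasure D1my] [IsProbabilityMeasure Dxt]
    [IsProbabilityMeasure Da]
    (α : ℝ) (xt : Fin d → ℝ)
    (δ : (Fin d → ℝ) → (Fin d → ℝ) → (Fin d → ℝ))
    (h : (Fin d → ℝ) → (Fin m → ℝ))
    (ζ : (Fin m → ℝ) → ℝ) (hζ : ∀ z, ζ (h z) ≠ 0)
    (hI1 : Integrable (fun p : Omega6 d => lcont h (simZ ζ) (XP α xt δ p) (XPP δ p) (XM δ p))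
      (Dy.prod (D1my.prod (Dxt.prod (Dxt.prod (Da.prod Da))))))
    (hI2 : Integrable (fun p : Omega6 d => clsLoss h ζ y (XP α xt δ p) (XPP δ p) (XM δ p))
      (Dy.prod (D1my.prod (Dxt.prod (Dxt.prod (Da.prod Da)))))) :
    ∫ p, lcont h (simZ ζ) (XP α xt δ p) (XPP δ p) (XM δ p)
        ∂(Dy.prod (D1my.prod (Dxt.prod (Dxt.prod (Da.prod Da)))))
      = ∫ p, clsLoss h ζ y (XP α xt δ p) (XPP δ p) (XM δ p)
        ∂(Dy.prod (D1my.prod (Dxt.prod (Dxt.prod (Da.prod Da))))) := by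
  exact integral_congr_ae (Filter.Eventually.of_forall fun p =>
    pointwise y hy h ζ hζ (XP α xt δ p) (XPP δ p) (XM δ p))
end

section
/- Fix y ∈ {0,1}. Let D_y be a probability measure on ℝ^d, D_{x̃} a probability measure on ℝ^d, D_α a probability measure on ℝ; fix α ∈ ℝ, x̃ ∈ ℝ^d, δ : ℝ^d × ℝ^d → ℝ^d, h : ℝ^d → ℝ^m, and ζ : ℝ^m → ℝ with ζ(h(z)) ≠ 0 for all z. Let x, x̄ ∼ D_y, x̃', x̃'' ∼ D_{x̃}, α', α'' ∼ D_α, all independent, and set x⁺ := x + α·δ(x, x̃), x⁺⁺ := x + α'·δ(x, x̃'), x⁻ := x̄ + α''·δ(x̄, x̃''). Define u := h(x⁺)/ζ(h(x⁺)), v := h(x⁺⁺)/ζ(h(x⁺⁺)), w := h(x⁻)/ζ(h(x⁻)). Then, assuming all relevant expectations are finite, E[ log( 1 + exp( −uᵀ(v − w) ) ) ] ≥ log( 1 + exp( −C ) ), where C := Σ_{k=1}^m Cov(u_k, v_k) is the sum over coordinates of the covariances of corresponding entries of u and v. -/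
open MeasureTheory

/-- `z ↦ h(z)/ζ(h(z))`. -/
noncomputable def nrm {d m : ℕ} (h : (Fin d → ℝ) → (Fin m → ℝ)) (ζ : (Fin m → ℝ) → ℝ)
    (z : Fin d → ℝ) : Fin m → ℝ :=
  fun k => h z k / ζ (h z)

/-- `u := h(x⁺)/ζ(h(x⁺))` where `x⁺ := x + α·δ(x, x̃)`. -/
noncomputable def Uvec {d m : ℕ} (h : (Fin d → ℝ) → (Fin m → ℝ)) (ζ : (Fin m → ℝ) → ℝ)
    (α : ℝ) (xt : Fin d → ℝ) (δ : (Fin d → ℝ) → (Fin d → ℝ) → (Fin d → ℝ))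
    (p : Omega6 d) : Fin m → ℝ :=
  nrm h ζ (p.1 + α • δ p.1 xt)

/-- `v := h(x⁺⁺)/ζ(h(x⁺⁺))` where `x⁺⁺ := x + α'·δ(x, x̃')`. -/
noncomputable def Vvec {d m : ℕ} (h : (Fin d → ℝ) → (Fin m → ℝ)) (ζ : (Fin m → ℝ) → ℝ)
    (δ : (Fin d → ℝ) → (Fin d → ℝ) → (Fin d → ℝ)) (p : Omega6 d) : Fin m → ℝ :=
  nrm h ζ (p.1 + p.2.2.2.2.1 • δ p.1 p.2.2.1)

/-- `w := h(x⁻)/ζ(h(x⁻))` where `x⁻ := x̄ + α''·δ(x̄, x̃'')`. -/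
noncomputable def Wvec {d m : ℕ} (h : (Fin d → ℝ) → (Fin m → ℝ)) (ζ : (Fin m → ℝ) → ℝ)
    (δ : (Fin d → ℝ) → (Fin d → ℝ) → (Fin d → ℝ)) (p : Omega6 d) : Fin m → ℝ :=
  nrm h ζ (p.2.1 + p.2.2.2.2.2 • δ p.2.1 p.2.2.2.1)

lemma phi_d1 (q : ℝ) : HasDerivAt (fun x => Real.log (1 + Real.exp (-x)))
    (-Real.exp (-q) / (1 + Real.exp (-q))) q := by
  have he : HasDerivAt (fun x : ℝ => Real.exp (-x)) (-Real.exp (-q)) q := by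
    simpa [Function.comp_def] using (Real.hasDerivAt_exp (-q)).comp q (hasDerivAt_neg q)
  have hg : HasDerivAt (fun x : ℝ => 1 + Real.exp (-x)) (-Real.exp (-q)) q := by
    simpa using he.const_add 1
  exact hg.log (by positivity)

lemma phi_d2 (q : ℝ) : HasDerivAt (fun x => -Real.exp (-x) / (1 + Real.exp (-x)))
    (Real.exp (-q) / (1 + Real.exp (-q)) ^ 2) q := by
  have he : HasDerivAt (fun x : ℝ => Real.exp (-x)) (-Real.exp (-q)) q := by
    simpa [Function.comp_def] using (Real.hasDerivAt_exp (-q)).comp q (hasDerivAt_neg q)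
  have hn : HasDerivAt (fun x : ℝ => -Real.exp (-x)) (Real.exp (-q)) q := by
    simpa [Pi.neg_def] using he.neg
  have hd : HasDerivAt (fun x : ℝ => 1 + Real.exp (-x)) (-Real.exp (-q)) q := by
    simpa using he.const_add 1
  have := hn.fun_div hd (by positivity)
  refine this.congr_deriv ?_
  ring

lemma phi_convex : ConvexOn ℝ Set.univ (fun q : ℝ => Real.log (1 + Real.exp (-q))) := by
  have hderiv : deriv (fun x => Real.log (1 + Real.exp (-x)))
      = fun q => -Real.exp (-q) / (1 + Real.exp (-q)) := funext fun q => (phi_d1 q).deriv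
  apply convexOn_of_deriv2_nonneg convex_univ
  · exact (Continuous.continuousOn (continuous_iff_continuousAt.2
      fun q => (phi_d1 q).differentiableAt.continuousAt))
  · exact fun q _ => (phi_d1 q).differentiableAt.differentiableWithinAt
  · rw [hderiv]
    exact fun q _ => (phi_d2 q).differentiableAt.differentiableWithinAt
  · intro x _
    have : deriv^[2] (fun x => Real.log (1 + Real.exp (-x))) x
        = Real.exp (-x) / (1 + Real.exp (-x)) ^ 2 := by
      simp only [Function.iterate_succ, Function.iterate_zero, Function.comp_apply, id_eq]
      rw [hderiv]
      exact (phi_d2 x).deriv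
    rw [this]; positivity

lemma phi_cont : Continuous (fun q : ℝ => Real.log (1 + Real.exp (-q))) :=
  continuous_iff_continuousAt.2 fun q => (phi_d1 q).differentiableAt.continuousAt

def swapE (α γ : Type*) [MeasurableSpace α] [MeasurableSpace γ] :
    α × α × γ ≃ᵐ α × α × γ :=
  MeasurableEquiv.prodAssoc.symm.trans
    ((MeasurableEquiv.prodComm.prodCongr (MeasurableEquiv.refl γ)).trans
      MeasurableEquiv.prodAssoc)

lemma swapE_mp {α γ : Type*} [MeasurableSpace α] [MeasurableSpace γ]
    (μ : Measure α) (ν : Measure γ) [SFinite μ] [SFinite ν] :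
    MeasurePreserving (swapE α γ) (μ.prod (μ.prod ν)) (μ.prod (μ.prod ν)) := by
  have h1 := (measurePreserving_prodAssoc μ μ ν).symm MeasurableEquiv.prodAssoc
  have h2 := (Measure.measurePreserving_swap (μ := μ) (ν := μ)).prod (MeasurePreserving.id ν)
  have h3 := measurePreserving_prodAssoc μ μ ν
  exact (h3.comp (h2.comp h1))

/-- permutation (x,x̄,x̃',x̃'',α',α'') ↦ (x̄,x,x̃'',x̃',α'',α'') -/
def permT (d : ℕ) : Omega6 d ≃ᵐ Omega6 d :=
  (swapE (Fin d → ℝ) ((Fin d → ℝ) × (Fin d → ℝ) × ℝ × ℝ)).trans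
    (((MeasurableEquiv.refl (Fin d → ℝ)).prodCongr ((MeasurableEquiv.refl (Fin d → ℝ)).prodCongr
        (swapE (Fin d → ℝ) (ℝ × ℝ)))).trans
      ((MeasurableEquiv.refl (Fin d → ℝ)).prodCongr ((MeasurableEquiv.refl (Fin d → ℝ)).prodCongr
        ((MeasurableEquiv.refl (Fin d → ℝ)).prodCongr ((MeasurableEquiv.refl (Fin d → ℝ)).prodCongr
          MeasurableEquiv.prodComm)))))

lemma permT_mp {d : ℕ} (Dy Dxt : Measure (Fin d → ℝ)) (Da : Measure ℝ)
    [SFinite Dy] [SFinite Dxt] [SFinite Da] :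
    MeasurePreserving (permT d) (Dy.prod (Dy.prod (Dxt.prod (Dxt.prod (Da.prod Da)))))
      (Dy.prod (Dy.prod (Dxt.prod (Dxt.prod (Da.prod Da))))) := by
  have h1 := swapE_mp Dy (Dxt.prod (Dxt.prod (Da.prod Da)))
  have h2 := (MeasurePreserving.id Dy).prod ((MeasurePreserving.id Dy).prod
    (swapE_mp Dxt (Da.prod Da)))
  have h3 := (MeasurePreserving.id Dy).prod ((MeasurePreserving.id Dy).prod
    ((MeasurePreserving.id Dxt).prod ((MeasurePreserving.id Dxt).prod
      (Measure.measurePreserving_swap (μ := Da) (ν := Da)))))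
  exact (h3.comp (h2.comp h1))


/-- With `x, x̄ ∼ D_y`, `x̃', x̃'' ∼ D_{x̃}`, `α', α'' ∼ D_α` all independent, and
`u, v, w` the normalized encodings of `x⁺, x⁺⁺, x⁻`,
`E[ log(1 + exp(−uᵀ(v − w))) ] ≥ log(1 + exp(−C))` where
`C = Σ_k Cov(u_k, v_k) = Σ_k (E[u_k v_k] − E[u_k]·E[v_k])`. -/
theorem stmt5 {d m : ℕ} (y : ℝ) (hy : y = 0 ∨ y = 1)
    (Dy Dxt : Measure (Fin d → ℝ)) (Da : Measure ℝ)
    [IsProbabilityMeasure Dy] [IsProbabilityMeasure Dxt] [IsProbabilityMeasure Da]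
    (α : ℝ) (xt : Fin d → ℝ)
    (δ : (Fin d → ℝ) → (Fin d → ℝ) → (Fin d → ℝ))
    (h : (Fin d → ℝ) → (Fin m → ℝ))
    (ζ : (Fin m → ℝ) → ℝ) (hζ : ∀ z, ζ (h z) ≠ 0)
    (hImain : Integrable (fun p : Omega6 d =>
        Real.log (1 + Real.exp (-(∑ k, Uvec h ζ α xt δ p k *
          (Vvec h ζ δ p k - Wvec h ζ δ p k)))))
      (Dy.prod (Dy.prod (Dxt.prod (Dxt.prod (Da.prod Da))))))
    (hIU : ∀ k, Integrable (fun p : Omega6 d => Uvec h ζ α xt δ p k)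
      (Dy.prod (Dy.prod (Dxt.prod (Dxt.prod (Da.prod Da))))))
    (hIV : ∀ k, Integrable (fun p : Omega6 d => Vvec h ζ δ p k)
      (Dy.prod (Dy.prod (Dxt.prod (Dxt.prod (Da.prod Da))))))
    (hIW : ∀ k, Integrable (fun p : Omega6 d => Wvec h ζ δ p k)
      (Dy.prod (Dy.prod (Dxt.prod (Dxt.prod (Da.prod Da))))))
    (hIUV : ∀ k, Integrable (fun p : Omega6 d => Uvec h ζ α xt δ p k * Vvec h ζ δ p k)
      (Dy.prod (Dy.prod (Dxt.prod (Dxt.prod (Da.prod Da))))))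
    (hIUW : ∀ k, Integrable (fun p : Omega6 d => Uvec h ζ α xt δ p k * Wvec h ζ δ p k)
      (Dy.prod (Dy.prod (Dxt.prod (Dxt.prod (Da.prod Da)))))) :
    ∫ p, Real.log (1 + Real.exp (-(∑ k, Uvec h ζ α xt δ p k *
          (Vvec h ζ δ p k - Wvec h ζ δ p k))))
        ∂(Dy.prod (Dy.prod (Dxt.prod (Dxt.prod (Da.prod Da)))))
      ≥ Real.log (1 + Real.exp (-(∑ k,
          ((∫ p, Uvec h ζ α xt δ p k * Vvec h ζ δ p k
              ∂(Dy.prod (Dy.prod (Dxt.prod (Dxt.prod (Da.prod Da))))))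
            - (∫ p, Uvec h ζ α xt δ p k
                ∂(Dy.prod (Dy.prod (Dxt.prod (Dxt.prod (Da.prod Da))))))
              * (∫ p, Vvec h ζ δ p k
                  ∂(Dy.prod (Dy.prod (Dxt.prod (Dxt.prod (Da.prod Da)))))))))) := by
  set ν5 : Measure ((Fin d → ℝ) × (Fin d → ℝ) × (Fin d → ℝ) × ℝ × ℝ) :=
    Dy.prod (Dxt.prod (Dxt.prod (Da.prod Da))) with hν5
  set μ6 : Measure (Omega6 d) := Dy.prod ν5 with hμ6
  -- ∫ W = ∫ V
  have hWV : ∀ k, ∫ p, Wvec h ζ δ p k ∂μ6 = ∫ p, Vvec h ζ δ p k ∂μ6 := by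
    intro k
    have hT := permT_mp Dy Dxt Da
    have := hT.integral_comp' (fun p => Vvec h ζ δ p k)
    calc ∫ p, Wvec h ζ δ p k ∂μ6 = ∫ p, Vvec h ζ δ (permT d p) k ∂μ6 := rfl
      _ = ∫ p, Vvec h ζ δ p k ∂μ6 := this
  -- ∫ U·W = ∫U · ∫W
  have hUW : ∀ k, ∫ p, Uvec h ζ α xt δ p k * Wvec h ζ δ p k ∂μ6
      = (∫ p, Uvec h ζ α xt δ p k ∂μ6) * (∫ p, Wvec h ζ δ p k ∂μ6) := by
    intro k
    have hu : ∫ p, Uvec h ζ α xt δ p k ∂μ6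
        = ∫ x, nrm h ζ (x + α • δ x xt) k ∂Dy := by
      rw [hμ6, MeasureTheory.integral_prod _ (hIU k)]
      simp [Uvec]
    have hw : ∫ p, Wvec h ζ δ p k ∂μ6
        = ∫ q, nrm h ζ (q.1 + q.2.2.2.2 • δ q.1 q.2.2.1) k ∂ν5 := by
      rw [hμ6, MeasureTheory.integral_prod _ (hIW k)]
      simp [Wvec]
    rw [hu, hw, hμ6, MeasureTheory.integral_prod _ (hIUW k)]
    have : ∀ x : Fin d → ℝ,
        ∫ q, Uvec h ζ α xt δ (x, q) k * Wvec h ζ δ (x, q) k ∂ν5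
        = nrm h ζ (x + α • δ x xt) k
            * ∫ q, nrm h ζ (q.1 + q.2.2.2.2 • δ q.1 q.2.2.1) k ∂ν5 := by
      intro x
      rw [← integral_const_mul]
      rfl
    rw [integral_congr_ae (Filter.Eventually.of_forall this), integral_mul_const]
  -- integrability of the inner sum
  have hSeq : (fun p : Omega6 d => ∑ k, Uvec h ζ α xt δ p k *
        (Vvec h ζ δ p k - Wvec h ζ δ p k))
      = fun p => ∑ k, (Uvec h ζ α xt δ p k * Vvec h ζ δ p k
          - Uvec h ζ α xt δ p k * Wvec h ζ δ p k) := by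
    funext p; exact Finset.sum_congr rfl fun k _ => mul_sub _ _ _
  have hSint : Integrable (fun p : Omega6 d => ∑ k, Uvec h ζ α xt δ p k *
      (Vvec h ζ δ p k - Wvec h ζ δ p k)) μ6 := by
    have hint : ∀ k ∈ Finset.univ, Integrable (fun p : Omega6 d =>
        Uvec h ζ α xt δ p k * Vvec h ζ δ p k - Uvec h ζ α xt δ p k * Wvec h ζ δ p k) μ6 :=
      fun k _ => (hIUV k).sub (hIUW k)
    rw [hSeq]
    exact integrable_finset_sum _ hint
  -- expectation of the sum equals C
  have hES : ∫ p, (∑ k, Uvec h ζ α xt δ p k * (Vvec h ζ δ p k - Wvec h ζ δ p k)) ∂μ6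
      = ∑ k, ((∫ p, Uvec h ζ α xt δ p k * Vvec h ζ δ p k ∂μ6)
          - (∫ p, Uvec h ζ α xt δ p k ∂μ6) * (∫ p, Vvec h ζ δ p k ∂μ6)) := by
    have hint : ∀ k ∈ Finset.univ, Integrable (fun p : Omega6 d =>
        Uvec h ζ α xt δ p k * Vvec h ζ δ p k - Uvec h ζ α xt δ p k * Wvec h ζ δ p k) μ6 :=
      fun k _ => (hIUV k).sub (hIUW k)
    rw [hSeq, integral_finset_sum _ hint]
    refine Finset.sum_congr rfl fun k _ => ?_
    rw [integral_sub (hIUV k) (hIUW k), hUW k, hWV k]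
  -- Jensen
  have hJ := phi_convex.map_integral_le (μ := μ6)
    (f := fun p : Omega6 d => ∑ k, Uvec h ζ α xt δ p k * (Vvec h ζ δ p k - Wvec h ζ δ p k))
    phi_cont.continuousOn isClosed_univ
    (Filter.Eventually.of_forall fun _ => trivial) hSint hImain
  rw [ge_iff_le, ← hES]
  exact hJ
end

section
/- (Mixup-noise regularization identity.) Let y ∈ {0,1}, let f : ℝ^d → ℝ be twice continuously differentiable, and let x ∈ ℝ^d with x ≠ 0 and ∇f(x) ≠ 0, satisfying f(x) = ∇f(x)ᵀx, ∇²f(x) = 0, and y·f(x) + (y−1)·f(x) ≥ 0. Let x̃ be a random vector in ℝ^d whose law has compact support, with E[x̃] = 0 and second-moment matrix Σ̃ := E[x̃ x̃ᵀ]. For α > 0 set x⁺ := x + α·(x̃ − x). Then E_{x̃}[ ℓ(f(x⁺), y) ] = ℓ(f(x), y) + c₁(x)·‖∇f(x)‖ + c₂(x)·‖∇f(x)‖² + c₃(x)·∇f(x)ᵀ Σ̃ ∇f(x) + r(α), where c₁(x) := α·|y − ψ(f(x))|·|cos(∇f(x), x)|·‖x‖ ≥ 0, c₂(x) := (α²/2)·ψ'(f(x))·cos(∇f(x),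 x)²·‖x‖² ≥ 0, c₃(x) := (α²/2)·ψ'(f(x)) > 0, cos(a, b) := aᵀb/(‖a‖·‖b‖) is the cosine similarity, ψ'(q) = ψ(q)(1−ψ(q)), and r : (0,∞) → ℝ satisfies lim_{α→0⁺} r(α)/α² = 0. -/
open MeasureTheory Filter
open scoped RealInnerProductSpace

/-- The logistic function `ψ(q) = exp(q)/(1+exp(q))`. -/
noncomputable def psi (q : ℝ) : ℝ := Real.exp q / (1 + Real.exp q)

/-- Cosine similarity `cos(a,b) = aᵀb/(‖a‖·‖b‖)`. -/
noncomputable def cosSim {E : Type*} [NormedAddCommGroup E] [InnerProductSpace ℝ E]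
    (a b : E) : ℝ :=
  ⟪a, b⟫ / (‖a‖ * ‖b‖)

lemma one_add_exp_pos (t : ℝ) : 0 < 1 + Real.exp t := by positivity

lemma psi_pos (q : ℝ) : 0 < psi q := by
  unfold psi; positivity

lemma psi_lt_one (q : ℝ) : psi q < 1 := by
  unfold psi
  rw [div_lt_one (one_add_exp_pos q)]
  linarith

lemma bce_eq (y q : ℝ) : bce q y = Real.log (1 + Real.exp (-q)) + (1 - y) * q := by
  have hE : 0 < Real.exp (-q) := Real.exp_pos _
  have h1 : 0 < 1 + Real.exp (-q) := one_add_exp_pos _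
  have h2 : 1 - 1 / (1 + Real.exp (-q)) = Real.exp (-q) / (1 + Real.exp (-q)) := by
    field_simp
    ring
  unfold bce
  rw [h2, one_div, Real.log_inv, Real.log_div hE.ne' h1.ne', Real.log_exp]
  ring

lemma hasDerivAt_bce (y q : ℝ) :
    HasDerivAt (fun q => bce q y) (psi q - y) q := by
  have h1 : ∀ t : ℝ, 0 < 1 + Real.exp (-t) := fun t => one_add_exp_pos _
  have hlog : HasDerivAt (fun t : ℝ => Real.log (1 + Real.exp (-t)) + (1 - y) * t)
      (-Real.exp (-q) / (1 + Real.exp (-q)) + (1 - y)) q := by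
    have hexp : HasDerivAt (fun t : ℝ => 1 + Real.exp (-t)) (-Real.exp (-q)) q := by
      have := (Real.hasDerivAt_exp (-q)).comp q ((hasDerivAt_id q).neg)
      simpa using (this.const_add 1)
    refine ((hexp.log (h1 q).ne').add ((hasDerivAt_id' q).const_mul (1 - y))).congr_deriv ?_; ring
  have heq : (fun q => bce q y) = fun t : ℝ => Real.log (1 + Real.exp (-t)) + (1 - y) * t := by
    funext t; exact bce_eq y t
  rw [heq]
  convert hlog using 1
  have hq : Real.exp (-q) = (Real.exp q)⁻¹ := Real.exp_neg q
  have hp : (0:ℝ) < Real.exp q := Real.exp_pos q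
  unfold psi
  rw [hq]
  field_simp
  ring

lemma hasDerivAt_psi (q : ℝ) :
    HasDerivAt psi (psi q * (1 - psi q)) q := by
  have h1 : 0 < 1 + Real.exp q := one_add_exp_pos q
  have h := (Real.hasDerivAt_exp q).div ((Real.hasDerivAt_exp q).const_add 1) h1.ne'
  refine h.congr_deriv ?_
  unfold psi
  field_simp

lemma continuous_bce (y : ℝ) : Continuous (fun q => bce q y) := by
  have : ∀ q, ContinuousAt (fun q => bce q y) q := fun q => (hasDerivAt_bce y q).continuousAt
  exact continuous_iff_continuousAt.mpr this

/-- Taylor with Lagrange-type remainder, order 2, via Rolle. -/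
lemma taylor2 {h h' h'' : ℝ → ℝ} (H1 : ∀ t, HasDerivAt h (h' t) t)
    (H2 : ∀ t, HasDerivAt h' (h'' t) t) {a : ℝ} (ha : 0 < a) :
    ∃ t ∈ Set.Ioo 0 a,
      h a - h 0 - a * h' 0 - a ^ 2 / 2 * h'' 0 = a ^ 2 / 2 * (h'' t - h'' 0) := by
  set M : ℝ := (h a - h 0 - a * h' 0) * 2 / a ^ 2 with hM
  set g : ℝ → ℝ := fun t => h a - h t - (a - t) * h' t - M * (a - t) ^ 2 / 2 with hg
  have hg' : ∀ t, HasDerivAt g ((a - t) * (M - h'' t)) t := by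
    intro t
    have d1 : HasDerivAt (fun t => (a - t) * h' t) (-(h' t) + (a - t) * h'' t) t := by
      have := ((hasDerivAt_const t a).sub (hasDerivAt_id t)).mul (H2 t)
      refine this.congr_deriv ?_; simp [id_eq]
    have d2 : HasDerivAt (fun t => M * (a - t) ^ 2 / 2) (-(M * (a - t))) t := by
      have hb : HasDerivAt (fun t : ℝ => (a - t) ^ 2) (2 * (a - t) * (-1)) t := by
        refine (((hasDerivAt_const t a).sub (hasDerivAt_id' t)).pow 2).congr_deriv ?_; norm_num
      have := (hb.const_mul M).div_const 2
      refine this.congr_deriv ?_; ring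
    have := (((H1 t).neg.const_add (h a)).sub d1).sub d2
    refine this.congr_deriv ?_; ring
  have hga : g a = 0 := by simp [hg]
  have hg0 : g 0 = 0 := by
    simp only [hg, hM, sub_zero]
    field_simp
    ring
  obtain ⟨c, hc, hc0⟩ := exists_deriv_eq_zero ha
    (fun t _ => (hg' t).continuousAt.continuousWithinAt) (hg0.trans hga.symm)
  have : (a - c) * (M - h'' c) = 0 := by rw [← (hg' c).deriv]; exact hc0
  have hac : a - c ≠ 0 := sub_ne_zero.mpr (ne_of_gt hc.2)
  have hMc : M = h'' c := by
    rcases mul_eq_zero.mp this with h | h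
    · exact absurd h hac
    · linarith
  refine ⟨c, hc, ?_⟩
  have ha2 : a ^ 2 ≠ 0 := by positivity
  have : h a - h 0 - a * h' 0 = M * a ^ 2 / 2 := by
    rw [hM]; field_simp
  rw [this, hMc]; ring

lemma continuous_psi : Continuous psi :=
  continuous_iff_continuousAt.mpr fun q => (hasDerivAt_psi q).continuousAt

section Mix

variable {F : Type*} [NormedAddCommGroup F] [NormedSpace ℝ F]

/-- The mixup curve `t ↦ x + t • (z - x)`. -/
def mixC (x : F) (t : ℝ) (z : F) : F := x + t • (z - x)

/-- First derivative of `t ↦ bce (f (mixC x t z)) y`. -/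
noncomputable def mixD1 (f : F → ℝ) (y : ℝ) (x : F) (t : ℝ) (z : F) : ℝ :=
  (psi (f (mixC x t z)) - y) * fderiv ℝ f (mixC x t z) (z - x)

/-- Second derivative of `t ↦ bce (f (mixC x t z)) y`. -/
noncomputable def mixD2 (f : F → ℝ) (y : ℝ) (x : F) (t : ℝ) (z : F) : ℝ :=
  psi (f (mixC x t z)) * (1 - psi (f (mixC x t z))) * fderiv ℝ f (mixC x t z) (z - x) ^ 2
    + (psi (f (mixC x t z)) - y) * fderiv ℝ (fderiv ℝ f) (mixC x t z) (z - x) (z - x)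

variable {f : F → ℝ} (y : ℝ) (x z : F)

lemma hasDerivAt_mixC (t : ℝ) : HasDerivAt (fun t => mixC x t z) (z - x) t := by
  simpa [mixC] using ((hasDerivAt_id t).smul_const (z - x)).const_add x

lemma hasDerivAt_mixF (hf : ContDiff ℝ 2 f) (t : ℝ) :
    HasDerivAt (fun t => f (mixC x t z)) (fderiv ℝ f (mixC x t z) (z - x)) t :=
  ((hf.differentiable (by norm_num)) _).hasFDerivAt.comp_hasDerivAt t (hasDerivAt_mixC x z t)

lemma hasDerivAt_mixG (hf : ContDiff ℝ 2 f) (t : ℝ) :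
    HasDerivAt (fun t => bce (f (mixC x t z)) y) (mixD1 f y x t z) t :=
  by have := (hasDerivAt_bce y (f (mixC x t z))).comp t (hasDerivAt_mixF x z hf t); exact this

lemma hasDerivAt_mixD1 (hf : ContDiff ℝ 2 f) (t : ℝ) :
    HasDerivAt (fun t => mixD1 f y x t z) (mixD2 f y x t z) t := by
  have hf1 : ContDiff ℝ 1 (fderiv ℝ f) := hf.fderiv_right (by norm_num)
  have h1 : HasDerivAt (fun t => fderiv ℝ f (mixC x t z))
      (fderiv ℝ (fderiv ℝ f) (mixC x t z) (z - x)) t :=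
    ((hf1.differentiable one_ne_zero) _).hasFDerivAt.comp_hasDerivAt t (hasDerivAt_mixC x z t)
  have h2 : HasDerivAt (fun t => fderiv ℝ f (mixC x t z) (z - x))
      (fderiv ℝ (fderiv ℝ f) (mixC x t z) (z - x) (z - x)) t := by
    simpa using h1.clm_apply (hasDerivAt_const t (z - x))
  have hpsi : HasDerivAt (fun t => psi (f (mixC x t z)) - y)
      (psi (f (mixC x t z)) * (1 - psi (f (mixC x t z))) * fderiv ℝ f (mixC x t z) (z - x)) t :=
    by have := ((hasDerivAt_psi (f (mixC x t z))).comp t (hasDerivAt_mixF x z hf t)).sub_const y; exact this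
  have := hpsi.mul h2
  refine this.congr_deriv ?_
  simp only [mixD1, mixD2]; ring

lemma continuous_mixC : Continuous (fun pz : ℝ × F => mixC x pz.1 pz.2) := by
  unfold mixC; fun_prop

lemma continuous_mixCz (t : ℝ) : Continuous (fun z : F => mixC x t z) := by
  unfold mixC; fun_prop

lemma continuous_mixG (hf : ContDiff ℝ 2 f) (a : ℝ) : Continuous (fun z : F => bce (f (mixC x a z)) y) :=
  (continuous_bce y).comp (hf.continuous.comp (continuous_mixCz x a))

lemma continuous_mixD1z (hf : ContDiff ℝ 2 f) (t : ℝ) : Continuous (fun z : F => mixD1 f y x t z) := by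
  have hf1 : ContDiff ℝ 1 (fderiv ℝ f) := hf.fderiv_right (by norm_num)
  exact ((continuous_psi.comp (hf.continuous.comp (continuous_mixCz x t))).sub
      continuous_const).mul
    ((hf1.continuous.comp (continuous_mixCz x t)).clm_apply (continuous_id.sub continuous_const))

lemma continuous_mixD2  (hf : ContDiff ℝ 2 f) : Continuous (fun pz : ℝ × F => mixD2 f y x pz.1 pz.2) := by
  have hf1 : ContDiff ℝ 1 (fderiv ℝ f) := hf.fderiv_right (by norm_num)
  have c1 : Continuous (fun pz : ℝ × F => f (mixC x pz.1 pz.2)) :=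
    hf.continuous.comp (continuous_mixC x)
  have c2 : Continuous (fun pz : ℝ × F => fderiv ℝ f (mixC x pz.1 pz.2)) :=
    hf1.continuous.comp (continuous_mixC x)
  have c3 : Continuous (fun pz : ℝ × F => fderiv ℝ (fderiv ℝ f) (mixC x pz.1 pz.2)) :=
    (hf1.continuous_fderiv one_ne_zero).comp (continuous_mixC x)
  have cv : Continuous (fun pz : ℝ × F => pz.2 - x) := continuous_snd.sub continuous_const
  have e2 : Continuous (fun pz : ℝ × F => fderiv ℝ f (mixC x pz.1 pz.2) (pz.2 - x)) :=
    c2.clm_apply cv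
  have e3 : Continuous (fun pz : ℝ × F =>
      fderiv ℝ (fderiv ℝ f) (mixC x pz.1 pz.2) (pz.2 - x) (pz.2 - x)) :=
    (c3.clm_apply cv).clm_apply cv
  exact (((continuous_psi.comp c1).mul
      (continuous_const.sub (continuous_psi.comp c1))).mul (e2.pow 2)).add
    (((continuous_psi.comp c1).sub continuous_const).mul e3)

lemma continuous_mixD2z (hf : ContDiff ℝ 2 f) (t : ℝ) : Continuous (fun z : F => mixD2 f y x t z) :=
 by
  have h := (continuous_mixD2 y x hf).comp
    (show Continuous fun z : F => ((t, z) : ℝ × F) from continuous_const.prodMk continuous_id)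
  exact h

end Mix

set_option maxHeartbeats 2000000 in
/-- Mixup-noise regularization identity (Theorem 2(i)).  With `x⁺ := x + α·(x̃ − x)` and
`x̃ ∼ μ` a compactly supported probability law with mean `0` and second-moment matrix
`Σ̃_{ij} = E[x̃ᵢ x̃ⱼ]`, for a correctly classified point `x` of a twice continuously
differentiable model `f` with `f(x) = ∇f(x)ᵀx`, `∇²f(x) = 0`:
`E[ℓ(f(x⁺),y)] = ℓ(f(x),y) + c₁·‖∇f(x)‖ + c₂·‖∇f(x)‖² + c₃·∇f(x)ᵀΣ̃∇f(x) + r(α)`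
with `r(α)/α² → 0` as `α → 0⁺`, where
`c₁ = α·|y−ψ(f(x))|·|cos(∇f(x),x)|·‖x‖ ≥ 0`,
`c₂ = (α²/2)·ψ'(f(x))·cos(∇f(x),x)²·‖x‖² ≥ 0`, and `c₃ = (α²/2)·ψ'(f(x)) > 0`. -/
theorem stmt9 {d : ℕ} (y : ℝ) (hy : y = 0 ∨ y = 1)
    (f : EuclideanSpace ℝ (Fin d) → ℝ) (hf : ContDiff ℝ 2 f)
    (x : EuclideanSpace ℝ (Fin d)) (hx : x ≠ 0) (hgrad : gradient f x ≠ 0)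
    (hlin : f x = ⟪gradient f x, x⟫)
    (hHess : fderiv ℝ (fderiv ℝ f) x = 0)
    (hcls : 0 ≤ y * f x + (y - 1) * f x)
    (μ : Measure (EuclideanSpace ℝ (Fin d))) [IsProbabilityMeasure μ]
    (K : Set (EuclideanSpace ℝ (Fin d))) (hK : IsCompact K) (hKsupp : μ Kᶜ = 0)
    (hmean : ∫ z, z ∂μ = 0) :
    ∃ r : ℝ → ℝ,
      Tendsto (fun a => r a / a ^ 2) (nhdsWithin 0 (Set.Ioi 0)) (nhds 0) ∧
      ∀ a : ℝ, 0 < a →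
        0 ≤ a * |y - psi (f x)| * |cosSim (gradient f x) x| * ‖x‖ ∧
        0 ≤ a ^ 2 / 2 * (psi (f x) * (1 - psi (f x))) * cosSim (gradient f x) x ^ 2 * ‖x‖ ^ 2 ∧
        0 < a ^ 2 / 2 * (psi (f x) * (1 - psi (f x))) ∧
        ∫ z, bce (f (x + a • (z - x))) y ∂μ
          = bce (f x) y
            + a * |y - psi (f x)| * |cosSim (gradient f x) x| * ‖x‖ * ‖gradient f x‖
            + a ^ 2 / 2 * (psi (f x) * (1 - psi (f x))) * cosSim (gradient f x) x ^ 2 * ‖x‖ ^ 2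
                * ‖gradient f x‖ ^ 2
            + a ^ 2 / 2 * (psi (f x) * (1 - psi (f x))) *
                (∑ i, ∑ j, gradient f x i * (∫ z, z i * z j ∂μ) * gradient f x j)
            + r a := by
  have hppos : 0 < psi (f x) * (1 - psi (f x)) :=
    mul_pos (psi_pos _) (by linarith [psi_lt_one (f x)])
  have hgn : ‖gradient f x‖ ≠ 0 := norm_ne_zero_iff.mpr hgrad
  have hxn : ‖x‖ ≠ 0 := norm_ne_zero_iff.mpr hx
  have hTg : ∀ w : EuclideanSpace ℝ (Fin d), ⟪gradient f x, w⟫ = fderiv ℝ f x w := fun w =>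
    InnerProductSpace.toDual_symm_apply
  -- sign of the first-order term
  have hsign : 0 ≤ (y - psi (f x)) * ⟪gradient f x, x⟫ := by
    rw [← hlin]
    rcases hy with h0 | h1
    · subst h0; nlinarith [psi_pos (f x), psi_lt_one (f x)]
    · subst h1; nlinarith [psi_pos (f x), psi_lt_one (f x)]
  have eq1 : |y - psi (f x)| * |cosSim (gradient f x) x| * ‖x‖ * ‖gradient f x‖
      = (y - psi (f x)) * ⟪gradient f x, x⟫ := by
    have habs : |y - psi (f x)| * |cosSim (gradient f x) x| * ‖x‖ * ‖gradient f x‖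
        = |(y - psi (f x)) * ⟪gradient f x, x⟫| := by
      rw [cosSim, abs_div, abs_mul (y - psi (f x)),
        abs_of_nonneg (mul_nonneg (norm_nonneg (gradient f x)) (norm_nonneg x))]
      field_simp
    rw [habs, abs_of_nonneg hsign]
  have eq2 : cosSim (gradient f x) x ^ 2 * ‖x‖ ^ 2 * ‖gradient f x‖ ^ 2
      = ⟪gradient f x, x⟫ ^ 2 := by
    rw [cosSim]
    field_simp
  -- measure facts
  have haeK : ∀ᵐ z ∂μ, z ∈ K := by
    rw [ae_iff]
    simpa [Set.compl_def] using hKsupp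
  have intK : ∀ {h : EuclideanSpace ℝ (Fin d) → ℝ}, Continuous h → Integrable h μ := by
    intro h hh
    obtain ⟨C, hC⟩ := hK.exists_bound_of_continuousOn hh.continuousOn
    refine (integrable_const C).mono' hh.aestronglyMeasurable ?_
    filter_upwards [haeK] with z hz using hC z hz
  have intId : Integrable (fun z : EuclideanSpace ℝ (Fin d) => z) μ := by
    obtain ⟨C, hC⟩ := hK.exists_bound_of_continuousOn continuous_id.continuousOn
    refine (integrable_const C).mono' continuous_id.aestronglyMeasurable ?_
    filter_upwards [haeK] with z hz using hC z hz
  have intGz : ∀ a : ℝ, Integrable (fun z => bce (f (mixC x a z)) y) μ := fun a =>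
    intK (continuous_mixG y x hf a)
  have intD1 : Integrable (fun z => mixD1 f y x 0 z) μ := intK (continuous_mixD1z y x hf 0)
  have intD2 : Integrable (fun z => mixD2 f y x 0 z) μ := intK (continuous_mixD2z y x hf 0)
  have hmixC0 : ∀ z : EuclideanSpace ℝ (Fin d), mixC x 0 z = x := by
    intro z; simp [mixC]
  have coordCont : ∀ i, Continuous (fun z : EuclideanSpace ℝ (Fin d) => z i) := fun i =>
    (EuclideanSpace.proj i : EuclideanSpace ℝ (Fin d) →L[ℝ] ℝ).continuous
  -- first-moment integral
  have hT0 : ∫ z, fderiv ℝ f x z ∂μ = 0 := by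
    rw [ContinuousLinearMap.integral_comp_comm _ intId, hmean, map_zero]
  have I1 : ∫ z, mixD1 f y x 0 z ∂μ = (y - psi (f x)) * ⟪gradient f x, x⟫ := by
    have h1 : (fun z => mixD1 f y x 0 z)
        = fun z => (psi (f x) - y) * (fderiv ℝ f x z - fderiv ℝ f x x) := by
      funext z
      simp [mixD1, hmixC0, map_sub]
    rw [h1, integral_const_mul,
      integral_sub (intK (fderiv ℝ f x).continuous) (integrable_const _), hT0, integral_const]
    simp only [measure_univ, ENNReal.toReal_one, one_smul, smul_eq_mul, probReal_univ, one_mul, mul_one]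
    rw [← hTg]
    ring
  -- second-moment integral
  have hTsum : ∀ z : EuclideanSpace ℝ (Fin d), fderiv ℝ f x z = ∑ i, gradient f x i * z i := by
    intro z
    rw [← hTg z]
    simp only [PiLp.inner_apply, RCLike.inner_apply, conj_trivial]
    exact Finset.sum_congr rfl fun i _ => mul_comm _ _
  have mom : ∫ z, (fderiv ℝ f x z) ^ 2 ∂μ
      = ∑ i, ∑ j, gradient f x i * (∫ z, z i * z j ∂μ) * gradient f x j := by
    have h1 : (fun z : EuclideanSpace ℝ (Fin d) => (fderiv ℝ f x z) ^ 2)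
        = fun z => ∑ i, ∑ j, gradient f x i * gradient f x j * (z i * z j) := by
      funext z
      rw [hTsum z, sq, Finset.sum_mul_sum]
      refine Finset.sum_congr rfl fun i _ => Finset.sum_congr rfl fun j _ => by ring
    rw [h1, integral_finset_sum]
    · refine Finset.sum_congr rfl fun i _ => ?_
      rw [integral_finset_sum]
      · refine Finset.sum_congr rfl fun j _ => ?_
        rw [integral_const_mul]
        ring
      · exact fun j _ => (intK (((coordCont i).mul (coordCont j)))).const_mul _
    · intro i _
      exact integrable_finset_sum _ fun j _ =>
        (intK (((coordCont i).mul (coordCont j)))).const_mul _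
  have I2 : ∫ z, mixD2 f y x 0 z ∂μ
      = psi (f x) * (1 - psi (f x)) *
        ((∑ i, ∑ j, gradient f x i * (∫ z, z i * z j ∂μ) * gradient f x j)
          + ⟪gradient f x, x⟫ ^ 2) := by
    have h1 : (fun z => mixD2 f y x 0 z)
        = fun z => psi (f x) * (1 - psi (f x)) *
            ((fderiv ℝ f x z) ^ 2 - (2 * fderiv ℝ f x x) * fderiv ℝ f x z
              + (fderiv ℝ f x x) ^ 2) := by
      funext z
      simp only [mixD2, hmixC0, hHess, map_sub, sub_self, ContinuousLinearMap.zero_apply]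
      ring
    rw [h1, integral_const_mul, integral_add, integral_sub, integral_const_mul, hT0,
      integral_const]
    · simp only [measure_univ, ENNReal.toReal_one, one_smul, smul_eq_mul, probReal_univ, one_mul, mul_one]
      rw [mom, ← hTg]
      ring
    · exact intK (((fderiv ℝ f x).continuous).pow 2)
    · exact (intK (fderiv ℝ f x).continuous).const_mul _
    · exact (intK (((fderiv ℝ f x).continuous).pow 2)).sub
        ((intK (fderiv ℝ f x).continuous).const_mul _)
    · exact integrable_const _
  -- Taylor expansion with explicit remainder point
  have hTay : ∀ a : ℝ, 0 < a → ∀ z : EuclideanSpace ℝ (Fin d),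
      ∃ t ∈ Set.Ioo 0 a,
        bce (f (mixC x a z)) y - bce (f (mixC x 0 z)) y - a * mixD1 f y x 0 z
          - a ^ 2 / 2 * mixD2 f y x 0 z
        = a ^ 2 / 2 * (mixD2 f y x t z - mixD2 f y x 0 z) := fun a ha z =>
    taylor2 (hasDerivAt_mixG y x z hf) (hasDerivAt_mixD1 y x z hf) ha
  have contRz : ∀ a : ℝ, Continuous (fun z : EuclideanSpace ℝ (Fin d) =>
      bce (f (mixC x a z)) y - bce (f (mixC x 0 z)) y - a * mixD1 f y x 0 z
        - a ^ 2 / 2 * mixD2 f y x 0 z) := by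
    intro a
    exact (((continuous_mixG y x hf a).sub (continuous_mixG y x hf 0)).sub
      (continuous_const.mul (continuous_mixD1z y x hf 0))).sub
      (continuous_const.mul (continuous_mixD2z y x hf 0))
  have hG0 : ∫ z, bce (f (mixC x 0 z)) y ∂μ = bce (f x) y := by
    have h1 : (fun z => bce (f (mixC x 0 z)) y)
        = fun _ : EuclideanSpace ℝ (Fin d) => bce (f x) y := by
      funext z; rw [hmixC0]
    rw [h1, integral_const]
    simp [measure_univ]
  have hIR : ∀ a : ℝ, ∫ z, (bce (f (mixC x a z)) y - bce (f (mixC x 0 z)) y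
        - a * mixD1 f y x 0 z - a ^ 2 / 2 * mixD2 f y x 0 z) ∂μ
      = (∫ z, bce (f (mixC x a z)) y ∂μ) - bce (f x) y
        - a * ((y - psi (f x)) * ⟪gradient f x, x⟫)
        - a ^ 2 / 2 * (psi (f x) * (1 - psi (f x)) *
            ((∑ i, ∑ j, gradient f x i * (∫ z, z i * z j ∂μ) * gradient f x j)
              + ⟪gradient f x, x⟫ ^ 2)) := by
    intro a
    have iG : Integrable (fun z => bce (f (mixC x a z)) y - bce (f (mixC x 0 z)) y) μ :=
      (intGz a).sub (intGz 0)
    have iD1a : Integrable (fun z => a * mixD1 f y x 0 z) μ := intD1.const_mul a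
    have iD2a : Integrable (fun z => a ^ 2 / 2 * mixD2 f y x 0 z) μ :=
      intD2.const_mul (a ^ 2 / 2)
    have iAll : Integrable (fun z => bce (f (mixC x a z)) y - bce (f (mixC x 0 z)) y
        - a * mixD1 f y x 0 z) μ := iG.sub iD1a
    rw [integral_sub iAll iD2a, integral_sub iG iD1a, integral_sub (intGz a) (intGz 0),
      integral_const_mul, integral_const_mul, I1, I2, hG0]
  -- choose r
  refine ⟨fun a => (∫ z, bce (f (mixC x a z)) y ∂μ) - bce (f x) y
      - a * ((y - psi (f x)) * ⟪gradient f x, x⟫)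
      - a ^ 2 / 2 * (psi (f x) * (1 - psi (f x))) * ⟪gradient f x, x⟫ ^ 2
      - a ^ 2 / 2 * (psi (f x) * (1 - psi (f x))) *
          (∑ i, ∑ j, gradient f x i * (∫ z, z i * z j ∂μ) * gradient f x j), ?_, ?_⟩
  · -- the limit
    have hreq : ∀ a : ℝ, a ∈ Set.Ioi (0:ℝ) →
        (∫ z, (bce (f (mixC x a z)) y - bce (f (mixC x 0 z)) y - a * mixD1 f y x 0 z
            - a ^ 2 / 2 * mixD2 f y x 0 z) / a ^ 2 ∂μ)
          = ((∫ z, bce (f (mixC x a z)) y ∂μ) - bce (f x) y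
            - a * ((y - psi (f x)) * ⟪gradient f x, x⟫)
            - a ^ 2 / 2 * (psi (f x) * (1 - psi (f x))) * ⟪gradient f x, x⟫ ^ 2
            - a ^ 2 / 2 * (psi (f x) * (1 - psi (f x))) *
                (∑ i, ∑ j, gradient f x i * (∫ z, z i * z j ∂μ) * gradient f x j)) / a ^ 2 := by
      intro a _
      rw [integral_div, hIR a]
      congr 1
      ring
    -- dominated convergence
    obtain ⟨C, hC⟩ := (isCompact_Icc.prod hK).exists_bound_of_continuousOn
      ((continuous_mixD2 y x hf).continuousOn)
    have hC' : ∀ t (z : EuclideanSpace ℝ (Fin d)), t ∈ Set.Icc (0:ℝ) 1 → z ∈ K →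
        |mixD2 f y x t z| ≤ C := by
      intro t z ht hz
      have := hC (t, z) ⟨ht, hz⟩
      simpa [Real.norm_eq_abs] using this
    have main : Tendsto (fun a : ℝ => ∫ z,
        (bce (f (mixC x a z)) y - bce (f (mixC x 0 z)) y - a * mixD1 f y x 0 z
          - a ^ 2 / 2 * mixD2 f y x 0 z) / a ^ 2 ∂μ)
        (nhdsWithin 0 (Set.Ioi 0)) (nhds 0) := by
      have htend := tendsto_integral_filter_of_dominated_convergence (μ := μ)
        (F := fun (a : ℝ) (z : EuclideanSpace ℝ (Fin d)) =>
          (bce (f (mixC x a z)) y - bce (f (mixC x 0 z)) y - a * mixD1 f y x 0 z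
            - a ^ 2 / 2 * mixD2 f y x 0 z) / a ^ 2)
        (f := fun _ : EuclideanSpace ℝ (Fin d) => (0:ℝ)) (bound := fun _ => C)
        (l := nhdsWithin 0 (Set.Ioi 0))
        (by
          filter_upwards with a
          exact ((contRz a).div_const _).aestronglyMeasurable)
        (by
          filter_upwards [Ioo_mem_nhdsGT_of_mem (Set.mem_Ico.mpr ⟨le_refl (0:ℝ), one_pos⟩)]
            with a ha
          filter_upwards [haeK] with z hz
          obtain ⟨t, ht, hteq⟩ := hTay a ha.1 z
          have ha2 : a ^ 2 ≠ 0 := pow_ne_zero 2 (ne_of_gt ha.1)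
          rw [hteq]
          have h3 : a ^ 2 / 2 * (mixD2 f y x t z - mixD2 f y x 0 z) / a ^ 2
              = (mixD2 f y x t z - mixD2 f y x 0 z) / 2 * (a ^ 2 / a ^ 2) := by ring
          rw [h3, div_self ha2, mul_one]
          have b1 : |mixD2 f y x t z| ≤ C := hC' t z ⟨ht.1.le, ht.2.le.trans ha.2.le⟩ hz
          have b2 : |mixD2 f y x 0 z| ≤ C := hC' 0 z ⟨le_refl 0, zero_le_one⟩ hz
          have b3 : |mixD2 f y x t z - mixD2 f y x 0 z|
              ≤ |mixD2 f y x t z| + |mixD2 f y x 0 z| := abs_sub _ _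
          rw [Real.norm_eq_abs, abs_div]
          have h4 : |(2:ℝ)| = 2 := by norm_num
          rw [h4]
          linarith)
        (integrable_const C)
        (by
          refine Filter.Eventually.of_forall fun z => ?_
          rw [Metric.tendsto_nhdsWithin_nhds]
          intro ε hε
          have hcont : ContinuousAt (fun t => mixD2 f y x t z) 0 :=
            ((continuous_mixD2 y x hf).comp
              (continuous_id.prodMk continuous_const :
                Continuous fun t : ℝ => ((t, z) : ℝ × EuclideanSpace ℝ (Fin d)))).continuousAt
          obtain ⟨δ, hδ, hδ2⟩ := Metric.continuousAt_iff.mp hcont ε hε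
          refine ⟨δ, hδ, ?_⟩
          intro a haIoi hdist
          have ha : (0:ℝ) < a := haIoi
          obtain ⟨t, ht, hteq⟩ := hTay a ha z
          have ha2 : a ^ 2 ≠ 0 := pow_ne_zero 2 (ne_of_gt ha)
          beta_reduce
          rw [hteq]
          have h3 : a ^ 2 / 2 * (mixD2 f y x t z - mixD2 f y x 0 z) / a ^ 2
              = (mixD2 f y x t z - mixD2 f y x 0 z) / 2 * (a ^ 2 / a ^ 2) := by ring
          rw [h3, div_self ha2, mul_one]
          have htd : dist t 0 < δ := by
            rw [Real.dist_eq, sub_zero, abs_of_pos ht.1]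
            rw [Real.dist_eq, sub_zero, abs_of_pos ha] at hdist
            linarith [ht.2]
          have hnear := hδ2 htd
          rw [Real.dist_eq] at hnear ⊢
          rw [sub_zero, abs_div]
          have h4 : |(2:ℝ)| = 2 := by norm_num
          rw [h4]
          have h5 : (0:ℝ) ≤ |mixD2 f y x t z - mixD2 f y x 0 z| := abs_nonneg _
          linarith)
      rw [integral_zero] at htend
      exact htend
    exact Tendsto.congr' (Filter.eventuallyEq_of_mem self_mem_nhdsWithin
      fun a ha => hreq a ha) main
  · intro a ha
    refine ⟨by positivity, ?_, ?_, ?_⟩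
    · exact mul_nonneg (mul_nonneg (mul_nonneg (by positivity) hppos.le) (sq_nonneg _))
        (sq_nonneg _)
    · exact mul_pos (by positivity) hppos
    · have hIeq : (∫ z, bce (f (x + a • (z - x))) y ∂μ)
          = ∫ z, bce (f (mixC x a z)) y ∂μ := rfl
      have e1 : a * |y - psi (f x)| * |cosSim (gradient f x) x| * ‖x‖ * ‖gradient f x‖
          = a * ((y - psi (f x)) * ⟪gradient f x, x⟫) := by
        rw [show a * |y - psi (f x)| * |cosSim (gradient f x) x| * ‖x‖ * ‖gradient f x‖
            = a * (|y - psi (f x)| * |cosSim (gradient f x) x| * ‖x‖ * ‖gradient f x‖) from by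
          ring, eq1]
      have e2 : a ^ 2 / 2 * (psi (f x) * (1 - psi (f x))) * cosSim (gradient f x) x ^ 2
            * ‖x‖ ^ 2 * ‖gradient f x‖ ^ 2
          = a ^ 2 / 2 * (psi (f x) * (1 - psi (f x))) * ⟪gradient f x, x⟫ ^ 2 := by
        rw [show a ^ 2 / 2 * (psi (f x) * (1 - psi (f x))) * cosSim (gradient f x) x ^ 2
            * ‖x‖ ^ 2 * ‖gradient f x‖ ^ 2
            = a ^ 2 / 2 * (psi (f x) * (1 - psi (f x)))
              * (cosSim (gradient f x) x ^ 2 * ‖x‖ ^ 2 * ‖gradient f x‖ ^ 2) from by ring, eq2]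
      rw [hIeq, e1, e2]
      ring
end

section
/- (Expected Rademacher complexity of the Mixup-constrained linear class.) Let μ be a probability distribution on ℝ^d with finite second moments such that Σ := E_{x∼μ}[x xᵀ] is invertible, let b > 0, let x₁, …, x_n be i.i.d. draws from μ, and let ξ₁, …, ξ_n be independent Rademacher random variables (each uniform on {−1, +1}), independent of the sample. Then E_{x₁,…,x_n}[ E_ξ[ sup_{w : wᵀΣw ≤ b} (1/n)·Σ_{i=1}^n ξ_i·wᵀx_i ] ] ≤ √( b·d / n ). -/
open MeasureTheory Matrix

section aux

lemma sign_orth (n : ℕ) (i i' : Fin n) :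
    ∑ s : Fin n → Bool, ((if s i then (1:ℝ) else -1) * (if s i' then (1:ℝ) else -1))
      = if i = i' then (2:ℝ)^n else 0 := by
  rcases eq_or_ne i i' with rfl | hne
  · simp only [if_pos rfl]
    have : ∀ s : Fin n → Bool, ((if s i then (1:ℝ) else -1) * (if s i then (1:ℝ) else -1)) = 1 := by
      intro s; cases s i <;> norm_num
    rw [Finset.sum_congr rfl (fun s _ => this s), Finset.sum_const, Finset.card_univ]
    simp [Fintype.card_fun]
  · rw [if_neg hne]
    set f : (Fin n → Bool) → ℝ :=
      fun s => (if s i then (1:ℝ) else -1) * (if s i' then (1:ℝ) else -1) with hf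
    have hinv : Function.Involutive (fun s : Fin n → Bool => Function.update s i (!(s i))) := by
      intro s; funext j
      rcases eq_or_ne j i with rfl | hj
      · simp
      · simp [Function.update_of_ne hj]
    have key : ∑ s, f s = -∑ s, f s := by
      conv_lhs => rw [← Equiv.sum_comp hinv.toPerm f]
      rw [← Finset.sum_neg_distrib]
      apply Finset.sum_congr rfl
      intro s _
      simp only [Function.Involutive.coe_toPerm, hf]
      rw [Function.update_self, Function.update_of_ne hne.symm]
      cases s i <;> cases s i' <;> norm_num
    linarith

lemma sum_signs_sq {n N : ℕ} (y : Fin n → Fin N → ℝ) :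
    ∑ s : Fin n → Bool, ∑ j, (∑ i, (if s i then (1:ℝ) else -1) * y i j)^2
      = 2^n * ∑ i, ∑ j, y i j ^ 2 := by
  rw [Finset.sum_comm]
  have hj : ∀ j : Fin N,
      ∑ s : Fin n → Bool, (∑ i, (if s i then (1:ℝ) else -1) * y i j)^2
        = 2^n * ∑ i, y i j ^ 2 := by
    intro j
    calc ∑ s : Fin n → Bool, (∑ i, (if s i then (1:ℝ) else -1) * y i j)^2
        = ∑ s : Fin n → Bool, ∑ i, ∑ i',
            ((if s i then (1:ℝ) else -1) * (if s i' then (1:ℝ) else -1)) * (y i j * y i' j) := by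
          refine Finset.sum_congr rfl fun s _ => ?_
          rw [sq, Finset.sum_mul_sum]
          exact Finset.sum_congr rfl fun i _ => Finset.sum_congr rfl fun i' _ => by ring
      _ = ∑ i, ∑ i', (∑ s : Fin n → Bool,
            ((if s i then (1:ℝ) else -1) * (if s i' then (1:ℝ) else -1))) * (y i j * y i' j) := by
          rw [Finset.sum_comm]
          refine Finset.sum_congr rfl fun i _ => ?_
          rw [Finset.sum_comm]
          exact Finset.sum_congr rfl fun i' _ => by rw [← Finset.sum_mul]
      _ = ∑ i, 2^n * y i j ^ 2 := by
          refine Finset.sum_congr rfl fun i _ => ?_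
          rw [Finset.sum_congr rfl fun i' (_ : i' ∈ Finset.univ) => by rw [sign_orth n i i']]
          simp [ite_mul, sq]
      _ = 2^n * ∑ i, y i j ^ 2 := by rw [Finset.mul_sum]
  rw [Finset.sum_congr rfl fun j _ => hj j, ← Finset.mul_sum, Finset.sum_comm]

lemma sum_sqrt_le {ι : Type*} [Fintype ι] (f : ι → ℝ) (hf0 : ∀ i, 0 ≤ f i) :
    ∑ i, Real.sqrt (f i) ≤ Real.sqrt (Fintype.card ι) * Real.sqrt (∑ i, f i) := by
  have h := Finset.sum_mul_sq_le_sq_mul_sq Finset.univ (fun i => Real.sqrt (f i)) (fun _ => 1)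
  simp only [mul_one, one_pow, Finset.sum_const, Finset.card_univ, smul_eq_mul, nsmul_eq_mul,
    mul_one] at h
  have h1 : ∑ i, Real.sqrt (f i) ≤ Real.sqrt ((∑ i, Real.sqrt (f i))^2) := by
    rw [Real.sqrt_sq_eq_abs]; exact le_abs_self _
  refine h1.trans ?_
  rw [← Real.sqrt_mul (by positivity)]
  apply Real.sqrt_le_sqrt
  calc (∑ i, Real.sqrt (f i))^2 ≤ (∑ i, Real.sqrt (f i) ^2) * (Fintype.card ι) := h
    _ ≤ (Fintype.card ι) * ∑ i, f i := by
        rw [mul_comm]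
        apply mul_le_mul_of_nonneg_left _ (by positivity)
        apply Finset.sum_le_sum
        intro i _
        rw [Real.sq_sqrt (hf0 i)]

lemma integral_sqrt_le {α : Type*} [MeasurableSpace α] (ν : Measure α) [IsProbabilityMeasure ν]
    (f : α → ℝ) (hf : Integrable f ν) (hf0 : ∀ x, 0 ≤ f x) :
    ∫ x, Real.sqrt (f x) ∂ν ≤ Real.sqrt (∫ x, f x ∂ν) := by
  have hI0 : 0 ≤ ∫ x, f x ∂ν := integral_nonneg hf0
  have key : ∀ c : ℝ, 0 < c → ∫ x, Real.sqrt (f x) ∂ν ≤ ((∫ x, f x ∂ν) + c^2) / (2*c) := by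
    intro c hc
    have hptwise : ∀ x, Real.sqrt (f x) ≤ (f x + c^2) / (2*c) := by
      intro x
      rw [le_div_iff₀ (by positivity)]
      nlinarith [Real.sq_sqrt (hf0 x), Real.sqrt_nonneg (f x), sq_nonneg (Real.sqrt (f x) - c)]
    have hint : Integrable (fun x => (f x + c^2) / (2*c)) ν :=
      (hf.add (integrable_const _)).div_const _
    calc ∫ x, Real.sqrt (f x) ∂ν ≤ ∫ x, (f x + c^2) / (2*c) ∂ν := by
          apply integral_mono_of_nonneg
          · filter_upwards with x using Real.sqrt_nonneg _
          · exact hint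
          · filter_upwards with x using hptwise x
      _ = ((∫ x, f x ∂ν) + c^2) / (2*c) := by
          rw [integral_div, integral_add hf (integrable_const _), integral_const]
          simp
  rcases eq_or_lt_of_le hI0 with h0 | hpos
  · rw [← h0, Real.sqrt_zero]
    apply le_of_forall_pos_le_add
    intro ε hε
    have := key ε hε
    rw [← h0] at this
    calc ∫ x, Real.sqrt (f x) ∂ν ≤ (0 + ε^2)/(2*ε) := this
      _ ≤ 0 + ε := by rw [zero_add, zero_add, div_le_iff₀ (by positivity)]; nlinarith
  · have hc : 0 < Real.sqrt (∫ x, f x ∂ν) := Real.sqrt_pos.mpr hpos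
    have h := key _ hc
    rw [Real.sq_sqrt hI0] at h
    refine h.trans (le_of_eq ?_)
    rw [div_eq_iff (by positivity)]
    nlinarith [Real.sq_sqrt hI0]

lemma measurePreserving_eval_pi' {ι : Type*} [Fintype ι] [DecidableEq ι] {α : Type*}
    [MeasurableSpace α] (μ : Measure α) [IsProbabilityMeasure μ] (i : ι) :
    MeasurePreserving (fun X : ι → α => X i) (Measure.pi fun _ => μ) μ := by
  refine ⟨measurable_pi_apply i, ?_⟩
  ext s hs
  rw [Measure.map_apply (measurable_pi_apply i) hs,
    show (fun X : ι → α => X i) ⁻¹' s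
      = Set.pi Set.univ (Function.update (fun _ : ι => (Set.univ : Set α)) i s) from
      Set.eval_preimage,
    Measure.pi_pi]
  rw [Finset.prod_eq_single i (fun j _ hj => by rw [Function.update_of_ne hj]; simp)
    (fun h => absurd (Finset.mem_univ i) h)]
  simp

lemma dot_le_sqrt {d : ℕ} (u v : Fin d → ℝ) :
    u ⬝ᵥ v ≤ Real.sqrt (∑ j, u j ^ 2) * Real.sqrt (∑ j, v j ^ 2) := by
  have h := Finset.sum_mul_sq_le_sq_mul_sq Finset.univ u v
  calc u ⬝ᵥ v ≤ |u ⬝ᵥ v| := le_abs_self _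
    _ = Real.sqrt ((u ⬝ᵥ v)^2) := (Real.sqrt_sq_eq_abs _).symm
    _ ≤ Real.sqrt ((∑ j, u j ^ 2) * ∑ j, v j ^ 2) := Real.sqrt_le_sqrt h
    _ = _ := Real.sqrt_mul (by positivity) _

end aux

/-- The (uncentered) second-moment matrix `Σ = E_{x∼μ}[x xᵀ]`. -/
noncomputable def mom {d : ℕ} (μ : Measure (Fin d → ℝ)) : Matrix (Fin d) (Fin d) ℝ :=
  Matrix.of fun i j => ∫ x, x i * x j ∂μ

/-- Expected Rademacher complexity of the Mixup-constrained linear class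
`F = {x ↦ wᵀx : wᵀΣw ≤ b}` with `Σ = E[x xᵀ]` invertible: over an i.i.d. sample
`x₁, …, x_n ∼ μ` and independent Rademacher signs (averaged over all `2^n` sign patterns),
`E[ E_ξ[ sup_{wᵀΣw ≤ b} (1/n)Σᵢ ξᵢ wᵀxᵢ ] ] ≤ √(b·d/n)`. -/
theorem stmt13 {d : ℕ} (n : ℕ) (hn : 0 < n)
    (μ : Measure (Fin d → ℝ)) [IsProbabilityMeasure μ]
    (hmom : ∀ i j, Integrable (fun x : Fin d → ℝ => x i * x j) μ)
    (hinv : IsUnit (mom μ).det)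
    (b : ℝ) (hb : 0 < b) :
    ∫ X : Fin n → (Fin d → ℝ),
        (((2 : ℝ) ^ n)⁻¹ *
          ∑ s : Fin n → Bool,
            ⨆ w : {w : Fin d → ℝ // ∑ i, w i * Matrix.mulVec (mom μ) w i ≤ b},
              (1 / (n : ℝ)) *
                ∑ i, (if s i then (1 : ℝ) else -1) * ∑ k, (w : Fin d → ℝ) k * X i k)
        ∂(Measure.pi fun _ : Fin n => μ)
      ≤ Real.sqrt (b * d / n) := by
  classical
  set ν : Measure (Fin n → Fin d → ℝ) := Measure.pi fun _ : Fin n => μ with hν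
  set M : Matrix (Fin d) (Fin d) ℝ := mom μ with hM
  -- quadratic form identity
  have hquad : ∀ v : Fin d → ℝ, v ⬝ᵥ (M *ᵥ v) = ∫ x, (∑ i, v i * x i)^2 ∂μ := by
    intro v
    have h1 : ∀ x : Fin d → ℝ, (∑ i, v i * x i)^2 = ∑ i, ∑ j, (v i * v j) * (x i * x j) := by
      intro x
      rw [sq, Finset.sum_mul_sum]
      exact Finset.sum_congr rfl fun i _ => Finset.sum_congr rfl fun j _ => by ring
    rw [show (fun x : Fin d → ℝ => (∑ i, v i * x i)^2)
        = fun x => ∑ i, ∑ j, (v i * v j) * (x i * x j) from funext h1] at *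
    rw [integral_finset_sum _ fun i _ =>
      integrable_finset_sum _ fun j _ => (hmom i j).const_mul _]
    rw [Finset.sum_congr rfl fun i (_ : i ∈ Finset.univ) =>
      integral_finset_sum _ fun j _ => (hmom i j).const_mul _]
    simp only [dotProduct, mulVec, hM, mom, Matrix.of_apply, integral_const_mul]
    refine Finset.sum_congr rfl fun i _ => ?_
    rw [Finset.mul_sum]
    refine Finset.sum_congr rfl fun j _ => ?_
    ring
  have hMps : M.PosSemidef := by
    refine Matrix.PosSemidef.of_dotProduct_mulVec_nonneg ?_ ?_
    · show Mᴴ = M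
      rw [conjTranspose_eq_transpose_of_trivial]
      ext i j
      show (∫ x, x j * x i ∂μ) = ∫ x, x i * x j ∂μ
      simp_rw [mul_comm]
    · intro v
      show (0:ℝ) ≤ star v ⬝ᵥ (M *ᵥ v)
      rw [show star v = v from rfl, hquad v]
      exact integral_nonneg fun x => sq_nonneg _
  open scoped MatrixOrder Matrix.Norms.L2Operator in
  set S := CFC.sqrt M with hSdef
  have hSS : S * S = M := by
    open scoped MatrixOrder Matrix.Norms.L2Operator in
    exact CFC.sqrt_mul_sqrt_self M hMps.nonneg
  have hSsym : Sᵀ = S := by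
    have := by
      open scoped MatrixOrder Matrix.Norms.L2Operator in
      exact (CFC.sqrt_nonneg M).posSemidef.isHermitian
    rwa [Matrix.IsHermitian, conjTranspose_eq_transpose_of_trivial] at this
  have hdetS : IsUnit S.det := by
    have : IsUnit (S.det * S.det) := by rw [← det_mul, hSS]; exact hinv
    exact isUnit_of_mul_isUnit_left this
  set C := S⁻¹ with hCdef
  have hCS : C * S = 1 := nonsing_inv_mul S hdetS
  have hSC : S * C = 1 := mul_nonsing_inv S hdetS
  have hCsym : Cᵀ = C := by rw [hCdef, transpose_nonsing_inv, hSsym]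
  have hCMC : C * M * C = 1 := by
    rw [← hSS, show C * (S * S) * C = (C * S) * (S * C) by simp only [Matrix.mul_assoc],
      hCS, hSC, one_mul]
  -- the key per-vector bound
  have key : ∀ (a w : Fin d → ℝ), w ⬝ᵥ (M *ᵥ w) ≤ b →
      a ⬝ᵥ w ≤ Real.sqrt (∑ j, (C *ᵥ a) j ^ 2) * Real.sqrt b := by
    intro a w hw
    have h1 : a ⬝ᵥ w = (C *ᵥ a) ⬝ᵥ (S *ᵥ w) := by
      rw [dotProduct_mulVec, ← mulVec_transpose, hSsym, mulVec_mulVec, hSC, one_mulVec]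
    have h2 : (S *ᵥ w) ⬝ᵥ (S *ᵥ w) = w ⬝ᵥ (M *ᵥ w) := by
      rw [dotProduct_mulVec, ← mulVec_transpose, hSsym, mulVec_mulVec, hSS, dotProduct_comm]
    calc a ⬝ᵥ w = (C *ᵥ a) ⬝ᵥ (S *ᵥ w) := h1
      _ ≤ Real.sqrt (∑ j, (C *ᵥ a) j ^ 2) * Real.sqrt (∑ j, (S *ᵥ w) j ^ 2) := dot_le_sqrt _ _
      _ ≤ Real.sqrt (∑ j, (C *ᵥ a) j ^ 2) * Real.sqrt b := by
          apply mul_le_mul_of_nonneg_left _ (Real.sqrt_nonneg _)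
          apply Real.sqrt_le_sqrt
          calc ∑ j, (S *ᵥ w) j ^ 2 = (S *ᵥ w) ⬝ᵥ (S *ᵥ w) := by
                simp [dotProduct, sq]
            _ = w ⬝ᵥ (M *ᵥ w) := h2
            _ ≤ b := hw
  -- nonemptiness of the constraint set
  haveI hne : Nonempty {w : Fin d → ℝ // ∑ i, w i * Matrix.mulVec (mom μ) w i ≤ b} := by
    refine ⟨⟨0, ?_⟩⟩
    simp only [Pi.zero_apply, zero_mul, Finset.sum_const_zero]
    exact hb.le
  -- per-X data
  set R : (Fin n → Fin d → ℝ) → ℝ := fun X => ∑ i, ∑ j, (C *ᵥ (X i)) j ^ 2 with hR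
  have hR0 : ∀ X, 0 ≤ R X := fun X => by positivity
  -- pointwise bound
  have hpt : ∀ X : Fin n → Fin d → ℝ,
      (((2 : ℝ) ^ n)⁻¹ *
          ∑ s : Fin n → Bool,
            ⨆ w : {w : Fin d → ℝ // ∑ i, w i * Matrix.mulVec (mom μ) w i ≤ b},
              (1 / (n : ℝ)) *
                ∑ i, (if s i then (1 : ℝ) else -1) * ∑ k, (w : Fin d → ℝ) k * X i k)
        ≤ (Real.sqrt b / n) * Real.sqrt (R X) := by
    intro X
    set e : (Fin n → Bool) → Fin n → ℝ := fun s i => if s i then (1:ℝ) else -1 with he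
    set a : (Fin n → Bool) → Fin d → ℝ := fun s k => ∑ i, e s i * X i k with ha
    set Q : (Fin n → Bool) → ℝ := fun s => ∑ j, (C *ᵥ (a s)) j ^ 2 with hQ
    have hval : ∀ s (w : Fin d → ℝ),
        ∑ i, e s i * ∑ k, w k * X i k = (a s) ⬝ᵥ w := by
      intro s w
      simp only [dotProduct, ha, Finset.mul_sum, Finset.sum_mul]
      rw [Finset.sum_comm]
      exact Finset.sum_congr rfl fun i _ => Finset.sum_congr rfl fun k _ => by ring
    have hsup : ∀ s : Fin n → Bool,
        (⨆ w : {w : Fin d → ℝ // ∑ i, w i * Matrix.mulVec (mom μ) w i ≤ b},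
          (1 / (n : ℝ)) * ∑ i, e s i * ∑ k, (w : Fin d → ℝ) k * X i k)
          ≤ (1 / (n:ℝ)) * (Real.sqrt (Q s) * Real.sqrt b) := by
      intro s
      apply ciSup_le
      rintro ⟨w, hw⟩
      rw [hval s w]
      apply mul_le_mul_of_nonneg_left _ (by positivity)
      exact key (a s) w hw
    have hQy : ∀ s, Q s = ∑ j, (∑ i, e s i * (C *ᵥ (X i)) j)^2 := by
      intro s
      refine Finset.sum_congr rfl fun j _ => ?_
      congr 1
      show (C *ᵥ (a s)) j = ∑ i, e s i * (C *ᵥ (X i)) j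
      simp only [mulVec, dotProduct, ha, Finset.mul_sum]
      rw [Finset.sum_comm]
      exact Finset.sum_congr rfl fun i _ => Finset.sum_congr rfl fun k _ => by ring
    have hsumQ : ∑ s : Fin n → Bool, Q s = 2^n * R X := by
      rw [Finset.sum_congr rfl fun s _ => hQy s]
      exact sum_signs_sq (fun i j => (C *ᵥ (X i)) j)
    have hQ0 : ∀ s, 0 ≤ Q s := fun s => by positivity
    calc ((2 : ℝ) ^ n)⁻¹ *
          ∑ s : Fin n → Bool,
            ⨆ w : {w : Fin d → ℝ // ∑ i, w i * Matrix.mulVec (mom μ) w i ≤ b},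
              (1 / (n : ℝ)) * ∑ i, e s i * ∑ k, (w : Fin d → ℝ) k * X i k
        ≤ ((2 : ℝ) ^ n)⁻¹ * ∑ s : Fin n → Bool, (1 / (n:ℝ)) * (Real.sqrt (Q s) * Real.sqrt b) := by
          apply mul_le_mul_of_nonneg_left _ (by positivity)
          exact Finset.sum_le_sum fun s _ => hsup s
      _ = ((2 : ℝ) ^ n)⁻¹ * ((1 / (n:ℝ)) * Real.sqrt b * ∑ s : Fin n → Bool, Real.sqrt (Q s)) := by
          rw [Finset.mul_sum, Finset.mul_sum, Finset.mul_sum]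
          exact Finset.sum_congr rfl fun s _ => by ring
      _ ≤ ((2 : ℝ) ^ n)⁻¹ * ((1 / (n:ℝ)) * Real.sqrt b *
            (Real.sqrt (2^n) * Real.sqrt (2^n * R X))) := by
          apply mul_le_mul_of_nonneg_left _ (by positivity)
          apply mul_le_mul_of_nonneg_left _ (by positivity)
          have := sum_sqrt_le Q hQ0
          rw [hsumQ] at this
          convert this using 3
          · rfl
          · simp [Fintype.card_fun]
      _ = (Real.sqrt b / n) * Real.sqrt (R X) := by
          have h2 : Real.sqrt ((2:ℝ)^n) * Real.sqrt (2^n * R X) = 2^n * Real.sqrt (R X) := by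
            rw [Real.sqrt_mul (by positivity : (0:ℝ) ≤ 2^n), ← mul_assoc,
              Real.mul_self_sqrt (by positivity : (0:ℝ) ≤ 2^n)]
          rw [h2]
          have h2n : ((2:ℝ)^n) ≠ 0 := by positivity
          field_simp
  -- nonnegativity of the integrand
  have hnn : ∀ X : Fin n → Fin d → ℝ,
      0 ≤ (((2 : ℝ) ^ n)⁻¹ *
          ∑ s : Fin n → Bool,
            ⨆ w : {w : Fin d → ℝ // ∑ i, w i * Matrix.mulVec (mom μ) w i ≤ b},
              (1 / (n : ℝ)) *
                ∑ i, (if s i then (1 : ℝ) else -1) * ∑ k, (w : Fin d → ℝ) k * X i k) := by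
    intro X
    apply mul_nonneg (by positivity)
    apply Finset.sum_nonneg
    intro s _
    have hbdd : BddAbove (Set.range fun w : {w : Fin d → ℝ // ∑ i, w i * Matrix.mulVec (mom μ) w i ≤ b} =>
        (1 / (n : ℝ)) * ∑ i, (if s i then (1 : ℝ) else -1) * ∑ k, (w : Fin d → ℝ) k * X i k) := by
      refine ⟨(1 / (n:ℝ)) * (Real.sqrt (∑ j, (C *ᵥ (fun k => ∑ i, (if s i then (1:ℝ) else -1) * X i k)) j ^ 2) * Real.sqrt b), ?_⟩
      rintro x ⟨⟨w, hw⟩, rfl⟩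
      have hval : ∑ i, (if s i then (1:ℝ) else -1) * ∑ k, w k * X i k
          = (fun k => ∑ i, (if s i then (1:ℝ) else -1) * X i k) ⬝ᵥ w := by
        simp only [dotProduct, Finset.mul_sum, Finset.sum_mul]
        rw [Finset.sum_comm]
        exact Finset.sum_congr rfl fun i _ => Finset.sum_congr rfl fun k _ => by ring
      simp only
      rw [hval]
      exact mul_le_mul_of_nonneg_left (key _ w hw) (by positivity)
    have h0 : (0:ℝ) = (1 / (n : ℝ)) *
        ∑ i, (if s i then (1 : ℝ) else -1) * ∑ k, ((⟨0, by
          simp only [Pi.zero_apply, zero_mul, Finset.sum_const_zero]; exact hb.le⟩ :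
            {w : Fin d → ℝ // ∑ i, w i * Matrix.mulVec (mom μ) w i ≤ b}) : Fin d → ℝ) k * X i k := by
      simp
    rw [h0]
    exact le_ciSup hbdd _
  -- integrability of R and value of its integral
  set r : (Fin d → ℝ) → ℝ := fun x => ∑ j, (C *ᵥ x) j ^ 2 with hr
  have hrexp : ∀ x : Fin d → ℝ, r x = ∑ j, ∑ k, ∑ l, (C j k * C j l) * (x k * x l) := by
    intro x
    refine Finset.sum_congr rfl fun j _ => ?_
    show (∑ k, C j k * x k)^2 = _
    rw [sq, Finset.sum_mul_sum]
    exact Finset.sum_congr rfl fun k _ => Finset.sum_congr rfl fun l _ => by ring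
  have hrint : Integrable r μ := by
    rw [show r = fun x => ∑ j, ∑ k, ∑ l, (C j k * C j l) * (x k * x l) from funext hrexp]
    exact integrable_finset_sum _ fun j _ => integrable_finset_sum _ fun k _ =>
      integrable_finset_sum _ fun l _ => (hmom k l).const_mul _
  have hrval : ∫ x, r x ∂μ = d := by
    rw [show r = fun x => ∑ j, ∑ k, ∑ l, (C j k * C j l) * (x k * x l) from funext hrexp]
    rw [integral_finset_sum _ fun j _ => integrable_finset_sum _ fun k _ =>
      integrable_finset_sum _ fun l _ => (hmom k l).const_mul _]
    rw [Finset.sum_congr rfl fun j (_ : j ∈ Finset.univ) => integral_finset_sum _ fun k _ =>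
      integrable_finset_sum _ fun l _ => (hmom k l).const_mul _]
    rw [Finset.sum_congr rfl fun j (_ : j ∈ Finset.univ) => Finset.sum_congr rfl
      fun k (_ : k ∈ Finset.univ) => integral_finset_sum _ fun l _ => (hmom k l).const_mul _]
    simp only [integral_const_mul]
    have hentry : ∀ j, ∑ k, ∑ l, (C j k * C j l) * (∫ x, x k * x l ∂μ) = (C * M * C) j j := by
      intro j
      rw [Matrix.mul_apply]
      rw [Finset.sum_comm]
      refine Finset.sum_congr rfl fun l _ => ?_
      rw [Matrix.mul_apply, Finset.sum_mul]
      refine Finset.sum_congr rfl fun k _ => ?_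
      have hClj : C l j = C j l := by
        conv_lhs => rw [show C l j = Cᵀ j l from (Matrix.transpose_apply C j l).symm, hCsym]
      show (C j k * C j l) * (∫ x, x k * x l ∂μ) = C j k * M k l * C l j
      rw [hClj]
      show (C j k * C j l) * (∫ x, x k * x l ∂μ) = C j k * (∫ x, x k * x l ∂μ) * C j l
      ring
    rw [Finset.sum_congr rfl fun j _ => hentry j, hCMC]
    simp [Matrix.one_apply]
  have hrmeas : Measurable r := by
    apply Finset.measurable_sum
    intro j _
    apply Measurable.pow_const
    show Measurable fun x : Fin d → ℝ => ∑ k, C j k * x k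
    apply Finset.measurable_sum
    intro k _
    exact (measurable_pi_apply k).const_mul _
  have hReq : ∀ X : Fin n → Fin d → ℝ, R X = ∑ i, r (X i) := fun X => rfl
  have hcomp : ∀ i : Fin n, Integrable (fun X : Fin n → Fin d → ℝ => r (X i)) ν := fun i =>
    ((measurePreserving_eval_pi' μ i).integrable_comp hrmeas.aestronglyMeasurable).mpr hrint
  have hRint : Integrable R ν := by
    rw [show R = fun X => ∑ i, r (X i) from funext hReq]
    exact integrable_finset_sum _ fun i _ => hcomp i
  have hRmeas : Measurable R := by
    rw [show R = fun X => ∑ i, r (X i) from funext hReq]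
    exact Finset.measurable_sum _ fun i _ => hrmeas.comp (measurable_pi_apply i)
  have hRval : ∫ X, R X ∂ν = n * d := by
    rw [show R = fun X => ∑ i, r (X i) from funext hReq]
    rw [integral_finset_sum _ fun i _ => hcomp i]
    have : ∀ i : Fin n, ∫ X, r (X i) ∂ν = ∫ x, r x ∂μ := by
      intro i
      have hmp := measurePreserving_eval_pi' μ i
      rw [← hmp.map_eq, integral_map hmp.measurable.aemeasurable
        (hmp.map_eq ▸ hrmeas.aestronglyMeasurable)]
    rw [Finset.sum_congr rfl fun i _ => this i, hrval, Finset.sum_const, Finset.card_univ]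
    simp
  -- integrability of sqrt R
  have hsqrtRint : Integrable (fun X => Real.sqrt (R X)) ν := by
    apply Integrable.mono ((hRint.add (integrable_const 1)).div_const 2)
      (hRmeas.sqrt.aestronglyMeasurable)
    filter_upwards with X
    simp only [Real.norm_eq_abs, Pi.add_apply]
    rw [abs_of_nonneg (Real.sqrt_nonneg _),
      abs_of_nonneg (by positivity : (0:ℝ) ≤ (R X + 1)/2)]
    nlinarith [Real.sq_sqrt (hR0 X), Real.sqrt_nonneg (R X), sq_nonneg (Real.sqrt (R X) - 1)]
  -- final chain
  calc ∫ X : Fin n → (Fin d → ℝ),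
        (((2 : ℝ) ^ n)⁻¹ *
          ∑ s : Fin n → Bool,
            ⨆ w : {w : Fin d → ℝ // ∑ i, w i * Matrix.mulVec (mom μ) w i ≤ b},
              (1 / (n : ℝ)) *
                ∑ i, (if s i then (1 : ℝ) else -1) * ∑ k, (w : Fin d → ℝ) k * X i k) ∂ν
      ≤ ∫ X, (Real.sqrt b / n) * Real.sqrt (R X) ∂ν := by
        apply integral_mono_of_nonneg
        · filter_upwards with X using hnn X
        · exact hsqrtRint.const_mul _
        · filter_upwards with X using hpt X
    _ = (Real.sqrt b / n) * ∫ X, Real.sqrt (R X) ∂ν := integral_const_mul _ _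
    _ ≤ (Real.sqrt b / n) * Real.sqrt (∫ X, R X ∂ν) := by
        apply mul_le_mul_of_nonneg_left _ (by positivity)
        exact integral_sqrt_le ν R hRint hR0
    _ = (Real.sqrt b / n) * Real.sqrt ((n:ℝ) * d) := by rw [hRval]
    _ = Real.sqrt (b * d / n) := by
        have hn' : (0:ℝ) < n := by exact_mod_cast hn
        rw [div_mul_eq_mul_div, ← Real.sqrt_mul hb.le,
          show b * ((n:ℝ) * d) = (b * d / n) * (n:ℝ)^2 by field_simp,
          Real.sqrt_mul (by positivity), Real.sqrt_sq hn'.le]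
        field_simp
end
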